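/- Let ν ≥ 1 and g ≥ 0 be integers and let λ be a partition of 2g+1 with at most ν+1 parts. Let η = (η_1, …, η_{ν+1}) with η_i = 2ν + 2 − 2i, and let S be the set of strictly decreasing (ν+1)-tuples of integers μ = (μ_1, …, μ_{ν+1}) with ν + 2 − i ≤ μ_i ≤ 2ν + 1 − i for each i (i.e., (ν+1, ν, …, 2, 1) ⊆ μ ⊆ (2ν, 2ν−1, …, ν) componentwise). Then Σ_{μ ∈ S} [ m_λ(μ_1 − η_1, …, μ_{ν+1} − η_{ν+1}) − m_λ(μ_1 − η_1 − 1, …, μ_{ν+1} − η_{ν+1} − 1) ] = Σ_{μ ∈ S} 2·m_λ(μ_1 − η_1, …, μ_{ν+1} − η_{ν+1}). -/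

import Mathlib

/-- The monomial symmetric polynomial associated to the exponent list `L`
(of length `n`), evaluated at integers `x : Fin n → ℤ`: the sum, over the set of
*distinct* tuples obtained by permuting the entries of `L`, of the corresponding
monomials `∏ i, x i ^ e i`. -/
def mSym (n : ℕ) (L : List ℕ) (x : Fin n → ℤ) : ℤ :=
  ∑ e ∈ Finset.image
      (fun σ : Equiv.Perm (Fin n) => fun i : Fin n => L.getD ((σ i) : ℕ) 0)
      Finset.univ,
    ∏ i : Fin n, x i ^ e i

/-- The set `S` of strictly decreasing `(ν+1)`-tuples of integers
`μ = (μ_1, …, μ_{ν+1})` with `ν + 2 − i ≤ μ_i ≤ 2ν + 1 − i` (1-indexed), i.e.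
`(ν+1, ν, …, 2, 1) ⊆ μ ⊆ (2ν, 2ν−1, …, ν)` componentwise. -/
noncomputable def tupleSet (ν : ℕ) : Finset (Fin (ν + 1) → ℤ) :=
  (Fintype.piFinset fun i : Fin (ν + 1) =>
      Finset.Icc ((ν : ℤ) + 1 - (i : ℕ)) (2 * (ν : ℤ) - (i : ℕ))).filter
    fun μ => ∀ i j : Fin (ν + 1), i < j → μ j < μ i

/-- The parts of the partition `P`, padded with zeros to a list of length `ν+1`. -/
def paddedList (ν : ℕ) (P : Multiset ℕ) : List ℕ :=
  Multiset.sort P (· ≤ ·) ++ List.replicate (ν + 1 - Multiset.card P) 0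

lemma mSym_comp_perm (n : ℕ) (L : List ℕ) (x : Fin n → ℤ) (τ : Equiv.Perm (Fin n)) :
    mSym n L (x ∘ ⇑τ) = mSym n L x := by
  unfold mSym
  refine Finset.sum_nbij' (fun e => e ∘ ⇑τ⁻¹) (fun e => e ∘ ⇑τ) ?_ ?_ ?_ ?_ ?_
  · intro e he
    simp only [Finset.mem_image, Finset.mem_univ, true_and] at he ⊢
    obtain ⟨σ, rfl⟩ := he
    exact ⟨σ * τ⁻¹, rfl⟩
  · intro e he
    simp only [Finset.mem_image, Finset.mem_univ, true_and] at he ⊢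
    obtain ⟨σ, rfl⟩ := he
    exact ⟨σ * τ, rfl⟩
  · intro e _; funext i; simp
  · intro e _; funext i; simp
  · intro e _
    have := Equiv.prod_comp τ (fun i => x i ^ e (τ⁻¹ i))
    simpa using this

lemma sum_getD (L : List ℕ) (σ : Equiv.Perm (Fin L.length)) :
    ∑ i : Fin L.length, L.getD ((σ i : Fin L.length) : ℕ) 0 = L.sum := by
  rw [Equiv.sum_comp σ (fun i : Fin L.length => L.getD (i : ℕ) 0)]
  have h : ∀ i : Fin L.length, L.getD (i : ℕ) 0 = L.get i := fun i =>
    List.getD_eq_getElem L 0 i.isLt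
  simp_rw [h]
  rw [← Fin.sum_ofFn, List.ofFn_get]

lemma mSym_neg (n : ℕ) (L : List ℕ) (hL : L.length = n) (hodd : Odd L.sum)
    (x : Fin n → ℤ) : mSym n L (fun i => - x i) = - mSym n L x := by
  unfold mSym
  rw [← Finset.sum_neg_distrib]
  refine Finset.sum_congr rfl ?_
  intro e he
  simp only [Finset.mem_image, Finset.mem_univ, true_and] at he
  obtain ⟨σ, rfl⟩ := he
  have key : ∑ i : Fin n, L.getD ((σ i : Fin n) : ℕ) 0 = L.sum := by
    subst hL; exact sum_getD L σ
  calc ∏ i : Fin n, (- x i) ^ L.getD ((σ i : Fin n) : ℕ) 0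
      = ∏ i : Fin n, ((-1) ^ L.getD ((σ i : Fin n) : ℕ) 0 * x i ^ L.getD ((σ i : Fin n) : ℕ) 0) := by
        refine Finset.prod_congr rfl fun i _ => ?_
        rw [← neg_one_mul, mul_pow]
    _ = (-1) ^ (∑ i : Fin n, L.getD ((σ i : Fin n) : ℕ) 0) *
          ∏ i : Fin n, x i ^ L.getD ((σ i : Fin n) : ℕ) 0 := by
        rw [Finset.prod_mul_distrib, Finset.prod_pow_eq_pow_sum]
    _ = - ∏ i : Fin n, x i ^ L.getD ((σ i : Fin n) : ℕ) 0 := by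
        rw [key, hodd.neg_one_pow, neg_one_mul]

lemma rev_val_int (ν : ℕ) (j : Fin (ν + 1)) :
    (((Fin.rev j : Fin (ν + 1)) : ℕ) : ℤ) = (ν : ℤ) - ((j : ℕ) : ℤ) := by
  have hj : (j : ℕ) ≤ ν := Nat.lt_succ_iff.mp j.isLt
  rw [Fin.val_rev]
  have h2 : ν + 1 - ((j : ℕ) + 1) = ν - (j : ℕ) := by omega
  rw [h2, Nat.cast_sub hj]

lemma flip_mem (ν : ℕ) (μ : Fin (ν + 1) → ℤ) (hμ : μ ∈ tupleSet ν) :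
    (fun j => 2 * (ν : ℤ) + 1 - μ (Fin.rev j)) ∈ tupleSet ν := by
  simp only [tupleSet, Finset.mem_filter, Fintype.mem_piFinset, Finset.mem_Icc] at hμ ⊢
  obtain ⟨hbox, hdec⟩ := hμ
  constructor
  · intro j
    have h := hbox (Fin.rev j)
    rw [rev_val_int] at h
    constructor <;> linarith [h.1, h.2]
  · intro i j hij
    have : Fin.rev j < Fin.rev i := Fin.rev_lt_rev.mpr hij
    have := hdec _ _ this
    linarith

/-- Let `ν ≥ 1`, `g ≥ 0`, and let `λ` be a partition of `2g+1`
with at most `ν+1` parts.  With `η_i = 2ν + 2 − 2i` (1-indexed) and `S` as above,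
`Σ_{μ ∈ S} [m_λ(μ − η) − m_λ(μ − η − (1,…,1))] = Σ_{μ ∈ S} 2·m_λ(μ − η)`. -/
theorem monomial_symmetric_sum_identity
    (ν g : ℕ) (hν : 1 ≤ ν)
    (lam : Nat.Partition (2 * g + 1)) (hparts : Multiset.card lam.parts ≤ ν + 1) :
    ∑ μ ∈ tupleSet ν,
        (mSym (ν + 1) (paddedList ν lam.parts)
            (fun i => μ i - (2 * (ν : ℤ) - 2 * ((i : ℕ) : ℤ)))
          - mSym (ν + 1) (paddedList ν lam.parts)
            (fun i => μ i - (2 * (ν : ℤ) - 2 * ((i : ℕ) : ℤ)) - 1))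
      = ∑ μ ∈ tupleSet ν,
          2 * mSym (ν + 1) (paddedList ν lam.parts)
            (fun i => μ i - (2 * (ν : ℤ) - 2 * ((i : ℕ) : ℤ))) := by
  set L := paddedList ν lam.parts with hLdef
  have hlen : L.length = ν + 1 := by
    simp only [hLdef, paddedList, List.length_append, List.length_replicate,
      Multiset.length_sort]
    omega
  have hsum : L.sum = 2 * g + 1 := by
    simp only [hLdef, paddedList, List.sum_append, List.sum_replicate, smul_eq_mul,
      mul_zero, add_zero]
    have : ((Multiset.sort lam.parts (· ≤ ·) : List ℕ) : Multiset ℕ) = lam.parts :=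
      Multiset.sort_eq _ _
    calc (Multiset.sort lam.parts (· ≤ ·)).sum
        = ((Multiset.sort lam.parts (· ≤ ·) : List ℕ) : Multiset ℕ).sum := by
          rw [Multiset.sum_coe]
      _ = lam.parts.sum := by rw [this]
      _ = 2 * g + 1 := lam.parts_sum
  have hodd : Odd L.sum := by rw [hsum]; exact ⟨g, by ring⟩
  -- key: sum over shifted equals negative of sum
  have key : ∑ μ ∈ tupleSet ν,
      mSym (ν + 1) L (fun i => μ i - (2 * (ν : ℤ) - 2 * ((i : ℕ) : ℤ)) - 1)
      = - ∑ μ ∈ tupleSet ν,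
          mSym (ν + 1) L (fun i => μ i - (2 * (ν : ℤ) - 2 * ((i : ℕ) : ℤ))) := by
    rw [← Finset.sum_neg_distrib]
    refine Finset.sum_nbij' (fun μ j => 2 * (ν : ℤ) + 1 - μ (Fin.rev j))
      (fun μ j => 2 * (ν : ℤ) + 1 - μ (Fin.rev j)) (flip_mem ν) (flip_mem ν) ?_ ?_ ?_
    · intro μ _; funext j; simp [Fin.rev_rev]
    · intro μ _; funext j; simp [Fin.rev_rev]
    · intro μ _
      set y : Fin (ν + 1) → ℤ := fun i => μ i - (2 * (ν : ℤ) - 2 * ((i : ℕ) : ℤ)) - 1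
        with hy
      have h1 : (fun j : Fin (ν + 1) =>
            (2 * (ν : ℤ) + 1 - μ (Fin.rev j)) - (2 * (ν : ℤ) - 2 * ((j : ℕ) : ℤ)))
          = (fun j => - y j) ∘ ⇑(Fin.revPerm : Equiv.Perm (Fin (ν + 1))) := by
        funext j
        simp only [Function.comp_apply, Fin.revPerm_apply, hy]
        have := rev_val_int ν j
        push_cast
        linarith [this]
      calc mSym (ν + 1) L y
          = - - mSym (ν + 1) L y := by ring
        _ = - mSym (ν + 1) L (fun j => - y j) := by rw [mSym_neg _ _ hlen hodd]
        _ = - mSym (ν + 1) L ((fun j => - y j) ∘ ⇑(Fin.revPerm : Equiv.Perm (Fin (ν + 1)))) := by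
            rw [mSym_comp_perm]
        _ = - mSym (ν + 1) L (fun j =>
              (2 * (ν : ℤ) + 1 - μ (Fin.rev j)) - (2 * (ν : ℤ) - 2 * ((j : ℕ) : ℤ))) := by
            rw [h1]
  rw [Finset.sum_sub_distrib, key, sub_neg_eq_add, ← Finset.sum_add_distrib]
  refine Finset.sum_congr rfl fun μ _ => ?_
  ring
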